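/- Let f : ℍ^n → ℝ be a smooth function on the Heisenberg group. Then f is h-convex if and only if for every point p ∈ ℍ^n the 2n × 2n symmetrized horizontal Hessian matrix with entries ½(X_i X_j f + X_j X_i f)(p), i, j = 1, …, 2n, is positive semidefinite, where X_j f = ∂f/∂x_j + (y_j/2) ∂f/∂t and X_{n+j} f = ∂f/∂y_j − (x_j/2) ∂f/∂t for j = 1, …, n. -/

import Mathlib

open Set MeasureTheory
open scoped RealInnerProductSpace ENNReal

/-- The Heisenberg group `ℍ^n`, as the set `ℝ^n × ℝ^n × ℝ` with coordinates `(x, y, t)`. -/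
abbrev Heis (n : ℕ) : Type := EuclideanSpace ℝ (Fin n) × EuclideanSpace ℝ (Fin n) × ℝ

/-- The horizontal line through `p = (x, y, t)` with direction `(a, b) ∈ ℝ^{2n}`:
`s ↦ (x + s a, y + s b, t + (s/2)(⟪y,a⟫ − ⟪x,b⟫))`. -/
noncomputable def hLine {n : ℕ} (p : Heis n) (a b : EuclideanSpace ℝ (Fin n)) (s : ℝ) :
    Heis n :=
  (p.1 + s • a, p.2.1 + s • b, p.2.2 + (s / 2) * (⟪p.2.1, a⟫ - ⟪p.1, b⟫))

/-- `γ` is an absolutely continuous horizontal curve in `ℍ^n` on `[c,d]`, with a.e.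
derivatives `u` and `v` of its `x`- and `y`-components; the `t`-component then satisfies
`t' = ½(⟪y, x'⟫ − ⟪x, y'⟫)` a.e. -/
def IsHorACHeis {n : ℕ} (γ : ℝ → Heis n) (u v : ℝ → EuclideanSpace ℝ (Fin n)) (c d : ℝ) :
    Prop :=
  c ≤ d ∧ IntegrableOn u (Icc c d) ∧ IntegrableOn v (Icc c d) ∧
  (∀ s ∈ Icc c d, (γ s).1 = (γ c).1 + ∫ r in c..s, u r) ∧
  (∀ s ∈ Icc c d, (γ s).2.1 = (γ c).2.1 + ∫ r in c..s, v r) ∧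
  (∀ s ∈ Icc c d, (γ s).2.2 = (γ c).2.2 +
    ∫ r in c..s, (1 / 2) * (⟪(γ r).2.1, u r⟫ - ⟪(γ r).1, v r⟫))

/-- The length of a horizontal curve: `∫ |(x'(s), y'(s))| ds` (Euclidean norm in `ℝ^{2n}`). -/
noncomputable def heisLength {n : ℕ} (u v : ℝ → EuclideanSpace ℝ (Fin n)) (c d : ℝ) : ℝ :=
  ∫ s in c..d, Real.sqrt (‖u s‖ ^ 2 + ‖v s‖ ^ 2)

/-- The Carnot–Carathéodory distance on `ℍ^n`: the infimum of the lengths of horizontal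
curves joining `p` to `q`. -/
noncomputable def dcHeis {n : ℕ} (p q : Heis n) : ℝ≥0∞ :=
  sInf {L | ∃ (γ : ℝ → Heis n) (u v : ℝ → EuclideanSpace ℝ (Fin n)) (c d : ℝ),
    IsHorACHeis γ u v c d ∧ γ c = p ∧ γ d = q ∧ L = ENNReal.ofReal (heisLength u v c d)}
/-- A function on the Heisenberg group is h-convex if its restriction to every horizontal
line is convex. -/
def HConvex {n : ℕ} (f : Heis n → ℝ) : Prop :=
  ∀ (p : Heis n) (a b : EuclideanSpace ℝ (Fin n)),
    ConvexOn ℝ Set.univ fun s => f (hLine p a b s)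

/-- The left-invariant horizontal vector fields of `ℍ^n` at the point `p = (x,y,t)`:
`X_j = ∂/∂x_j + (y_j/2) ∂/∂t` and `X_{n+j} = ∂/∂y_j − (x_j/2) ∂/∂t`, indexed by
`Fin n ⊕ Fin n`. -/
noncomputable def heisXfield {n : ℕ} (p : Heis n) : Fin n ⊕ Fin n → Heis n
  | Sum.inl j => (EuclideanSpace.single j 1, 0, p.2.1 j / 2)
  | Sum.inr j => (0, EuclideanSpace.single j 1, -(p.1 j / 2))

/-- The derivative `X_i f` of `f` along the horizontal vector field `X_i`. -/
noncomputable def heisXderiv {n : ℕ} (f : Heis n → ℝ) (i : Fin n ⊕ Fin n) (q : Heis n) :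
    ℝ :=
  fderiv ℝ f q (heisXfield q i)

lemma hasDerivAt_hLine {n : ℕ} (p : Heis n) (a b : EuclideanSpace ℝ (Fin n)) (s : ℝ) :
    HasDerivAt (hLine p a b)
      ((a, b, (1/2) * (⟪p.2.1, a⟫ - ⟪p.1, b⟫)) : Heis n) s := by
  have h1 : HasDerivAt (fun s : ℝ => p.1 + s • a) a s := by
    simpa using ((hasDerivAt_id s).smul_const a).const_add p.1
  have h2 : HasDerivAt (fun s : ℝ => p.2.1 + s • b) b s := by
    simpa using ((hasDerivAt_id s).smul_const b).const_add p.2.1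
  have h3 : HasDerivAt (fun s : ℝ => p.2.2 + (s / 2) * (⟪p.2.1, a⟫ - ⟪p.1, b⟫))
      ((1/2) * (⟪p.2.1, a⟫ - ⟪p.1, b⟫)) s := by
    have := (((hasDerivAt_id s).div_const 2).mul_const (⟪p.2.1, a⟫ - ⟪p.1, b⟫)).const_add p.2.2
    simpa using this
  exact h1.prodMk (h2.prodMk h3)

lemma contDiff_heisXfield {n : ℕ} (i : Fin n ⊕ Fin n) :
    ContDiff ℝ (⊤ : ℕ∞) (fun q : Heis n => heisXfield q i) := by
  cases i with
  | inl j =>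
    exact contDiff_const.prodMk (contDiff_const.prodMk
      (((EuclideanSpace.proj j : EuclideanSpace ℝ (Fin n) →L[ℝ] ℝ).contDiff.comp
        (contDiff_fst.comp contDiff_snd)).div_const 2))
  | inr j =>
    exact contDiff_const.prodMk (contDiff_const.prodMk
      ((((EuclideanSpace.proj j : EuclideanSpace ℝ (Fin n) →L[ℝ] ℝ).contDiff.comp
        contDiff_fst).div_const 2).neg))

lemma contDiff_heisXderiv {n : ℕ} {f : Heis n → ℝ} (hf : ContDiff ℝ (⊤ : ℕ∞) f)
    (i : Fin n ⊕ Fin n) : ContDiff ℝ (⊤ : ℕ∞) (heisXderiv f i) := by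
  have h1 : ContDiff ℝ (⊤ : ℕ∞) (fderiv ℝ f) := hf.fderiv_right (by simp)
  exact h1.clm_apply (contDiff_heisXfield i)

lemma hLine_inner {n : ℕ} (p : Heis n) (a b : EuclideanSpace ℝ (Fin n)) (s : ℝ) :
    ⟪(hLine p a b s).2.1, a⟫ - ⟪(hLine p a b s).1, b⟫ = ⟪p.2.1, a⟫ - ⟪p.1, b⟫ := by
  simp only [hLine]
  rw [inner_add_left, inner_add_left, real_inner_smul_left, real_inner_smul_left,
    real_inner_comm a b]
  ring

lemma single_decomp {n : ℕ} (a : EuclideanSpace ℝ (Fin n)) :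
    a = ∑ j, a j • EuclideanSpace.single j (1:ℝ) := by
  have := (EuclideanSpace.basisFun (Fin n) ℝ).toBasis.sum_repr a
  simpa [EuclideanSpace.basisFun_apply] using this.symm

lemma heis_decomp {n : ℕ} (q : Heis n) (a b : EuclideanSpace ℝ (Fin n)) :
    ((a, b, (1/2) * (⟪q.2.1, a⟫ - ⟪q.1, b⟫)) : Heis n)
      = (∑ j, a j • heisXfield q (Sum.inl j)) + (∑ j, b j • heisXfield q (Sum.inr j)) := by
  refine Prod.ext ?_ (Prod.ext ?_ ?_)
  · simp [heisXfield, Prod.fst_sum, ← single_decomp]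
  · simp [heisXfield, Prod.snd_sum, Prod.fst_sum, ← single_decomp]
  · simp only [heisXfield, Prod.snd_add, Prod.snd_sum, Prod.smul_snd, Prod.smul_fst,
      smul_eq_mul, PiLp.inner_apply, RCLike.inner_apply, conj_trivial]
    rw [mul_sub, Finset.mul_sum, Finset.mul_sum, sub_eq_add_neg, ← Finset.sum_neg_distrib]
    congr 1 <;> exact Finset.sum_congr rfl fun i _ => by ring

lemma clm_decomp {n : ℕ} (q : Heis n) (a b : EuclideanSpace ℝ (Fin n))
    (L : Heis n →L[ℝ] ℝ) :
    L ((a, b, (1/2) * (⟪q.2.1, a⟫ - ⟪q.1, b⟫)) : Heis n)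
      = (∑ j, a j * L (heisXfield q (Sum.inl j))) + ∑ j, b j * L (heisXfield q (Sum.inr j)) := by
  rw [heis_decomp, map_add, map_sum, map_sum]
  simp [smul_eq_mul]

lemma hasDerivAt_comp_hLine {n : ℕ} {g : Heis n → ℝ} (hg : ContDiff ℝ (⊤ : ℕ∞) g)
    (p : Heis n) (a b : EuclideanSpace ℝ (Fin n)) (s : ℝ) :
    HasDerivAt (fun s => g (hLine p a b s))
      ((∑ j, a j * fderiv ℝ g (hLine p a b s) (heisXfield (hLine p a b s) (Sum.inl j)))
        + ∑ j, b j * fderiv ℝ g (hLine p a b s) (heisXfield (hLine p a b s) (Sum.inr j))) s := by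
  have hd := (hg.differentiable (by simp) (hLine p a b s)).hasFDerivAt
  have h := hd.comp_hasDerivAt s (hasDerivAt_hLine p a b s)
  rw [show ((a, b, (1/2) * (⟪p.2.1, a⟫ - ⟪p.1, b⟫)) : Heis n)
      = ((a, b, (1/2) * (⟪(hLine p a b s).2.1, a⟫ - ⟪(hLine p a b s).1, b⟫)) : Heis n) by
    rw [hLine_inner], clm_decomp] at h
  exact h

lemma symm_sum {ι : Type*} [Fintype ι] (c : ι → ℝ) (A : ι → ι → ℝ) :
    ∑ i, ∑ j, c i * ((1/2) * (A j i + A i j)) * c j = ∑ i, ∑ j, c i * A i j * c j := by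
  have h1 : ∑ i, ∑ j, c i * A j i * c j = ∑ i, ∑ j, c i * A i j * c j := by
    rw [Finset.sum_comm]
    exact Finset.sum_congr rfl fun i _ => Finset.sum_congr rfl fun j _ => by ring
  calc ∑ i, ∑ j, c i * ((1/2) * (A j i + A i j)) * c j
      = ∑ i, ∑ j, ((1/2) * (c i * A j i * c j) + (1/2) * (c i * A i j * c j)) :=
        Finset.sum_congr rfl fun i _ => Finset.sum_congr rfl fun j _ => by ring
    _ = (1/2) * (∑ i, ∑ j, c i * A j i * c j) + (1/2) * (∑ i, ∑ j, c i * A i j * c j) := by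
        simp only [Finset.sum_add_distrib, Finset.mul_sum]
    _ = ∑ i, ∑ j, c i * A i j * c j := by rw [h1]; ring

lemma deriv_nonneg_of_monotone' {g : ℝ → ℝ} {g' x : ℝ} (hm : Monotone g)
    (h : HasDerivAt g g' x) : 0 ≤ g' := by
  have ht : Filter.Tendsto (slope g x) (nhdsWithin x (Set.Ioi x)) (nhds g') :=
    (hasDerivAt_iff_tendsto_slope.1 h).mono_left
      (nhdsWithin_mono x fun y hy => ne_of_gt hy)
  refine ge_of_tendsto ht ?_
  filter_upwards [self_mem_nhdsWithin] with y hy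
  rw [slope_def_field]
  exact div_nonneg (sub_nonneg.2 (hm (le_of_lt hy))) (sub_nonneg.2 (le_of_lt hy))

lemma heis_derivs {n : ℕ} {f : Heis n → ℝ} (hf : ContDiff ℝ (⊤ : ℕ∞) f)
    (p : Heis n) (a b : EuclideanSpace ℝ (Fin n)) (c : Fin n ⊕ Fin n → ℝ)
    (hca : ∀ j, c (Sum.inl j) = a j) (hcb : ∀ j, c (Sum.inr j) = b j) :
    (∀ s, HasDerivAt (fun s => f (hLine p a b s))
        (∑ i : Fin n ⊕ Fin n, c i * heisXderiv f i (hLine p a b s)) s) ∧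
    (∀ s, HasDerivAt
        (fun s => ∑ i : Fin n ⊕ Fin n, c i * heisXderiv f i (hLine p a b s))
        (∑ i : Fin n ⊕ Fin n, ∑ j : Fin n ⊕ Fin n,
          c i * fderiv ℝ (heisXderiv f i) (hLine p a b s)
            (heisXfield (hLine p a b s) j) * c j) s) := by
  constructor
  · intro s
    have h := hasDerivAt_comp_hLine hf p a b s
    convert h using 1
    rw [Fintype.sum_sum_type]
    congr 1 <;> exact Finset.sum_congr rfl fun j _ => by
      first
        | rw [hca]; rfl
        | rw [hcb]; rfl
  · intro s
    have H : ∀ i : Fin n ⊕ Fin n, HasDerivAt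
        (fun s => heisXderiv f i (hLine p a b s))
        (∑ j : Fin n ⊕ Fin n, fderiv ℝ (heisXderiv f i) (hLine p a b s)
          (heisXfield (hLine p a b s) j) * c j) s := by
      intro i
      have h := hasDerivAt_comp_hLine (contDiff_heisXderiv hf i) p a b s
      convert h using 1
      rw [Fintype.sum_sum_type]
      congr 1 <;> exact Finset.sum_congr rfl fun j _ => by
        first
          | rw [hca]; ring
          | rw [hcb]; ring
    have h := HasDerivAt.fun_sum (u := Finset.univ)
      (fun i _ => ((H i).const_mul (c i)))
    refine h.congr_deriv ?_
    exact Eq.symm <| Finset.sum_congr rfl fun i _ => by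
      rw [Finset.mul_sum]
      exact Finset.sum_congr rfl fun j _ => by ring

/-- A smooth function on `ℍ^n` is h-convex iff its symmetrized horizontal
Hessian `½(X_i X_j f + X_j X_i f)` is positive semidefinite at every point. -/
theorem heisenberg_hconvex_iff_hessian_psd {n : ℕ} (f : Heis n → ℝ)
    (hf : ContDiff ℝ (⊤ : ℕ∞) f) :
    HConvex f ↔
      ∀ (p : Heis n) (c : Fin n ⊕ Fin n → ℝ),
        0 ≤ ∑ i : Fin n ⊕ Fin n, ∑ j : Fin n ⊕ Fin n,
          c i * ((1 / 2) * (fderiv ℝ (heisXderiv f j) p (heisXfield p i) +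
            fderiv ℝ (heisXderiv f i) p (heisXfield p j))) * c j := by
  constructor
  · intro h p c
    set a : EuclideanSpace ℝ (Fin n) := (WithLp.toLp 2 fun j => c (Sum.inl j)) with ha
    set b : EuclideanSpace ℝ (Fin n) := (WithLp.toLp 2 fun j => c (Sum.inr j)) with hb
    obtain ⟨hg', hg''⟩ := heis_derivs hf p a b c (fun j => rfl) (fun j => rfl)
    have hdiff : Differentiable ℝ (fun s => f (hLine p a b s)) :=
      fun s => (hg' s).differentiableAt
    have hderiv_eq : deriv (fun s => f (hLine p a b s))
        = fun s => ∑ i : Fin n ⊕ Fin n, c i * heisXderiv f i (hLine p a b s) :=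
      funext fun s => (hg' s).deriv
    have hmono : Monotone
        (fun s => ∑ i : Fin n ⊕ Fin n, c i * heisXderiv f i (hLine p a b s)) := by
      have hm := (h p a b).monotoneOn_deriv (fun x _ => hdiff x)
      rw [hderiv_eq] at hm
      exact monotoneOn_univ.1 hm
    have h0 := deriv_nonneg_of_monotone' hmono (hg'' 0)
    have hline0 : hLine p a b 0 = p := by
      simp [hLine]
    rw [hline0] at h0
    rw [symm_sum c (fun i j => fderiv ℝ (heisXderiv f i) p (heisXfield p j))]
    exact h0
  · intro h p a b
    set c : Fin n ⊕ Fin n → ℝ := Sum.elim (fun j => a j) (fun j => b j) with hc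
    obtain ⟨hg', hg''⟩ := heis_derivs hf p a b c (fun j => rfl) (fun j => rfl)
    have hQ0 : ∀ s, 0 ≤ ∑ i : Fin n ⊕ Fin n, ∑ j : Fin n ⊕ Fin n,
        c i * fderiv ℝ (heisXderiv f i) (hLine p a b s)
          (heisXfield (hLine p a b s) j) * c j := by
      intro s
      have := h (hLine p a b s) c
      rwa [symm_sum c (fun i j => fderiv ℝ (heisXderiv f i) (hLine p a b s)
        (heisXfield (hLine p a b s) j))] at this
    have hmono : Monotone
        (fun s => ∑ i : Fin n ⊕ Fin n, c i * heisXderiv f i (hLine p a b s)) := by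
      apply monotone_of_deriv_nonneg (fun s => (hg'' s).differentiableAt)
      intro s
      rw [(hg'' s).deriv]
      exact hQ0 s
    have hdiff : Differentiable ℝ (fun s => f (hLine p a b s)) :=
      fun s => (hg' s).differentiableAt
    have hderiv_eq : deriv (fun s => f (hLine p a b s))
        = fun s => ∑ i : Fin n ⊕ Fin n, c i * heisXderiv f i (hLine p a b s) :=
      funext fun s => (hg' s).deriv
    exact Monotone.convexOn_univ_of_deriv hdiff (hderiv_eq ▸ hmono)
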